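/- One has lim_{τ→0⁺} √τ · exp( φ(q₁(τ),τ) + i·(2π·log τ + π)/τ^2 ) = −1; equivalently, e^{φ(q₁(τ),τ)} = −(1/√τ)·exp(i·(−2π log τ − π)/τ^2)·E(τ) with E(τ) → 1 as τ → 0⁺. -/

import Mathlib

set_option maxHeartbeats 1600000


open Real Complex Filter

noncomputable def Ppoly (τ : ℝ) (z : ℂ) : ℂ :=
  z ^ 3 + (Complex.I - 1 / (4 * (π : ℂ)) - Complex.I / (τ : ℂ) ^ 2) * z ^ 2
    - z / 4 - Complex.I / 4

noncomputable def phi (τ : ℝ) (z : ℂ) : ℂ :=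
  -(π : ℂ) * z - (π : ℂ) / (4 * z) +
    ((1 / 2 + 2 * (π : ℂ) * Complex.I / (τ : ℂ) ^ 2) / 2) *
      Complex.log (1 - Complex.I * z)

lemma key_bound (τ : ℝ) (hτ : 0 < τ) (hτ4 : τ ≤ 1/4) (q : ℂ)
    (hq : ‖q - (Complex.I / (τ : ℂ) ^ 2 + 1 / (4 * (π : ℂ)) - Complex.I)‖
      ≤ τ ^ 2 / 2) :
    ‖phi τ q + Complex.I * ((2 * (π : ℂ) * (Real.log τ : ℂ) + (π : ℂ)) / (τ : ℂ) ^ 2)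
      + ((Real.log τ : ℂ)) / 2 - (π : ℂ) * Complex.I‖ ≤ 4 * τ ^ 2 := by
  have hπ0 : (0:ℝ) < π := Real.pi_pos
  have hπ3 : (3:ℝ) ≤ π := by
    have := Real.pi_gt_three; linarith
  have hτC : (τ : ℂ) ≠ 0 := by exact_mod_cast hτ.ne'
  have hπC : (π : ℂ) ≠ 0 := by exact_mod_cast hπ0.ne'
  have hτ2pos : (0:ℝ) < τ ^ 2 := by positivity
  have hτ2le : τ ^ 2 ≤ 1/16 := by nlinarith
  have hτn : ‖((τ:ℂ))^2‖ = τ^2 := by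
    rw [norm_pow, Complex.norm_of_nonneg hτ.le]
  have hπn : ‖((π:ℂ))‖ = π := by
    rw [Complex.norm_of_nonneg hπ0.le]
  have hIn : ‖Complex.I‖ = 1 := by rw [Complex.norm_I]
  set ε : ℂ := q - (Complex.I / (τ : ℂ) ^ 2 + 1 / (4 * (π : ℂ)) - Complex.I) with hε
  set u : ℂ := (τ : ℂ)^2 * (1 - Complex.I * q) - 1 with hudef
  have hu : u = -Complex.I * (τ : ℂ)^2 / (4 * (π:ℂ)) - Complex.I * (τ : ℂ)^2 * ε := by
    rw [hudef, hε]
    field_simp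
    linear_combination (4*(π:ℂ)*((τ:ℂ)^2-1)) * Complex.I_sq
  have hεn : ‖ε‖ ≤ τ^2/2 := by exact hq
  have hun : ‖u‖ ≤ τ^2/8 := by
    rw [hu]
    have h1 : ‖-Complex.I * (τ : ℂ)^2 / (4 * (π:ℂ))‖ = τ^2 / (4*π) := by
      rw [norm_div, norm_mul, norm_neg, hIn, hτn, norm_mul, hπn]
      norm_num
    have h2 : ‖Complex.I * (τ : ℂ)^2 * ε‖ ≤ τ^2 * (τ^2/2) := by
      rw [norm_mul, norm_mul, hIn, hτn, one_mul]
      exact mul_le_mul_of_nonneg_left hεn hτ2pos.le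
    calc ‖_ - _‖ ≤ ‖-Complex.I * (τ : ℂ)^2 / (4 * (π:ℂ))‖ + ‖Complex.I * (τ : ℂ)^2 * ε‖ :=
          norm_sub_le _ _
      _ ≤ τ^2/(4*π) + τ^2 * (τ^2/2) := by linarith [h1.le, h2]
      _ ≤ τ^2/8 := by
          have : τ^2/(4*π) ≤ τ^2/12 := by
            apply div_le_div_of_nonneg_left hτ2pos.le (by norm_num)
            linarith
          nlinarith
  have hun' : ‖u‖ ≤ 1/128 := le_trans hun (by nlinarith)
  have hw0 : (1 : ℂ) + u ≠ 0 := by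
    intro h
    have h1 : ‖u‖ = 1 := by
      have : u = -1 := by linear_combination h
      simp [this]
    rw [h1] at hun'
    norm_num at hun'
  -- lower bound for ‖q‖
  have hqlow : 1/(2*τ^2) ≤ ‖q‖ := by
    have hI : ‖Complex.I / (τ : ℂ) ^ 2‖ = 1/τ^2 := by
      rw [norm_div, hIn, hτn]
    have h2 : ‖(1 / (4 * (π : ℂ)) - Complex.I)‖ ≤ 2 := by
      have hn : ‖(1:ℂ) / (4 * (π : ℂ))‖ = 1/(4*π) := by
        rw [norm_div, norm_mul, hπn, norm_one]
        norm_num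
      have h14 : 1/(4*π) ≤ 1 := by
        rw [div_le_one (by linarith)]; linarith
      calc ‖(1 / (4 * (π : ℂ)) - Complex.I)‖ ≤ ‖(1:ℂ) / (4 * (π : ℂ))‖ + ‖Complex.I‖ :=
            norm_sub_le _ _
        _ ≤ 2 := by rw [hn, hIn]; linarith
    have h1 : 1/τ^2 - 2 ≤ ‖Complex.I / (τ:ℂ)^2 + 1/(4*(π:ℂ)) - Complex.I‖ := by
      have key := norm_sub_norm_le (Complex.I / (τ:ℂ)^2) (-(1/(4*(π:ℂ)) - Complex.I))
      rw [norm_neg, sub_neg_eq_add] at key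
      have heq : Complex.I / (τ:ℂ)^2 + (1/(4*(π:ℂ)) - Complex.I)
          = Complex.I / (τ:ℂ)^2 + 1/(4*(π:ℂ)) - Complex.I := by ring
      rw [heq, hI] at key
      linarith
    have h3 : ‖Complex.I / (τ:ℂ)^2 + 1/(4*(π:ℂ)) - Complex.I‖ ≤ ‖q‖ + ‖ε‖ := by
      have : Complex.I / (τ:ℂ)^2 + 1/(4*(π:ℂ)) - Complex.I = q - ε := by rw [hε]; ring
      rw [this]
      exact norm_sub_le _ _
    have h16 : 16 ≤ 1/τ^2 := by
      rw [le_div_iff₀ hτ2pos]; nlinarith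
    have h4 : 1/(2*τ^2) ≤ 1/τ^2 - 2 - τ^2/2 := by
      have he : 1/(2*τ^2) = (1/τ^2)/2 := by ring
      rw [he]
      nlinarith
    linarith
  have hq0 : q ≠ 0 := by
    intro h
    rw [h, norm_zero] at hqlow
    have : (0:ℝ) < 1/(2*τ^2) := by positivity
    linarith
  -- log factorization
  have hlog : Complex.log (1 - Complex.I * q)
      = ((-2 * Real.log τ : ℝ) : ℂ) + Complex.log (1 + u) := by
    have hfac : (1 : ℂ) - Complex.I * q = ((1/τ^2 : ℝ) : ℂ) * (1 + u) := by
      rw [hudef]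
      push_cast
      field_simp
      ring
    rw [hfac, Complex.log_ofReal_mul (by positivity) hw0]
    congr 1
    rw [one_div, Real.log_inv, Real.log_pow]
    push_cast
    ring
  set L : ℂ := Complex.log (1 + u) with hL
  -- exact algebraic identity
  have hid : phi τ q + Complex.I * ((2 * (π : ℂ) * (Real.log τ : ℂ) + (π : ℂ)) / (τ : ℂ) ^ 2)
      + ((Real.log τ : ℂ)) / 2 - (π : ℂ) * Complex.I
      = -(π:ℂ)/(4*q) + L/4 + ((π:ℂ) * Complex.I / (τ:ℂ)^2) * (L - u) := by
    have hst : ((τ:ℂ)^2)⁻¹ * (τ:ℂ)^2 = 1 := inv_mul_cancel₀ (pow_ne_zero 2 hτC)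
    rw [phi, hlog, hudef]
    push_cast
    linear_combination (-((π:ℂ)*q) * ((τ:ℂ)^2)⁻¹ * (τ:ℂ)^2) * Complex.I_sq
      + ((π:ℂ)*q + (π:ℂ)*Complex.I) * hst
  rw [hid]
  -- bounds
  have hLn : ‖L‖ ≤ (3/2) * ‖u‖ :=
    Complex.norm_log_one_add_half_le_self (by linarith)
  have hLu : ‖L - u‖ ≤ ‖u‖^2 * (1 - ‖u‖)⁻¹ / 2 :=
    Complex.norm_log_one_add_sub_self_le (by linarith)
  have hinv : (1 - ‖u‖)⁻¹ ≤ 2 := by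
    rw [inv_le_comm₀ (by linarith) (by norm_num)]
    linarith
  have hun0 : 0 ≤ ‖u‖ := norm_nonneg u
  have hLu' : ‖L - u‖ ≤ ‖u‖^2 := by
    calc ‖L - u‖ ≤ ‖u‖^2 * (1 - ‖u‖)⁻¹ / 2 := hLu
      _ ≤ ‖u‖^2 * 2 / 2 := by
          apply div_le_div_of_nonneg_right _ (by norm_num)
          exact mul_le_mul_of_nonneg_left hinv (by positivity)
      _ = ‖u‖^2 := by ring
  have t1 : ‖-(π:ℂ)/(4*q)‖ ≤ 2 * τ^2 := by
    rw [norm_div, norm_neg, norm_mul, hπn]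
    have h4 : ‖(4:ℂ)‖ = 4 := by norm_num
    rw [h4]
    have hqpos : (0:ℝ) < ‖q‖ := lt_of_lt_of_le (by positivity) hqlow
    rw [div_le_iff₀ (by positivity)]
    have hstep : π ≤ 2 * τ^2 * (4 * (1/(2*τ^2))) := by
      have : 2 * τ^2 * (4 * (1/(2*τ^2))) = 4 := by field_simp
      rw [this]; linarith [Real.pi_lt_d2]
    calc π ≤ 2 * τ^2 * (4 * (1/(2*τ^2))) := hstep
      _ ≤ 2 * τ^2 * (4 * ‖q‖) := by
          apply mul_le_mul_of_nonneg_left _ (by positivity)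
          apply mul_le_mul_of_nonneg_left hqlow (by norm_num)
  have t2 : ‖L/4‖ ≤ τ^2 := by
    rw [norm_div]
    have h4 : ‖(4:ℂ)‖ = 4 := by norm_num
    rw [h4, div_le_iff₀ (by norm_num)]
    calc ‖L‖ ≤ (3/2) * ‖u‖ := hLn
      _ ≤ (3/2) * (τ^2/8) := by linarith
      _ ≤ τ^2 * 4 := by nlinarith
  have t3 : ‖((π:ℂ) * Complex.I / (τ:ℂ)^2) * (L - u)‖ ≤ τ^2 := by
    rw [norm_mul, norm_div, norm_mul, hπn, hIn, hτn, mul_one]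
    calc π / τ^2 * ‖L - u‖ ≤ π / τ^2 * (‖u‖^2) := by
          apply mul_le_mul_of_nonneg_left hLu' (by positivity)
      _ ≤ π / τ^2 * ((τ^2/8)^2) := by
          apply mul_le_mul_of_nonneg_left _ (by positivity)
          nlinarith
      _ = π * τ^2 / 64 := by field_simp; ring
      _ ≤ τ^2 := by nlinarith [Real.pi_lt_d2]
  calc ‖-(π:ℂ)/(4*q) + L/4 + ((π:ℂ) * Complex.I / (τ:ℂ)^2) * (L - u)‖
      ≤ ‖-(π:ℂ)/(4*q) + L/4‖ + ‖((π:ℂ) * Complex.I / (τ:ℂ)^2) * (L - u)‖ := norm_add_le _ _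
    _ ≤ ‖-(π:ℂ)/(4*q)‖ + ‖L/4‖ + ‖((π:ℂ) * Complex.I / (τ:ℂ)^2) * (L - u)‖ := by
        linarith [norm_add_le (-(π:ℂ)/(4*q)) (L/4)]
    _ ≤ 4 * τ^2 := by linarith

theorem statement12 (q₁ : ℝ → ℂ)
    (hq₁ : ∀ τ : ℝ, 0 < τ → τ ≤ 1 / 4 →
      ‖q₁ τ - (Complex.I / (τ : ℂ) ^ 2 + 1 / (4 * (π : ℂ)) - Complex.I)‖
          ≤ τ ^ 2 / 2 ∧ Ppoly τ (q₁ τ) = 0) :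
    Tendsto
      (fun τ : ℝ => ((Real.sqrt τ : ℝ) : ℂ) *
        Complex.exp (phi τ (q₁ τ) +
          Complex.I * ((2 * (π : ℂ) * (Real.log τ : ℂ) + (π : ℂ)) / (τ : ℂ) ^ 2)))
      (nhdsWithin 0 (Set.Ioi 0)) (nhds (-1)) := by
  set E : ℝ → ℂ := fun τ => phi τ (q₁ τ) +
    Complex.I * ((2 * (π : ℂ) * (Real.log τ : ℂ) + (π : ℂ)) / (τ : ℂ) ^ 2)
    + ((Real.log τ : ℂ)) / 2 - (π : ℂ) * Complex.I with hE
  have heq : ∀ᶠ τ in nhdsWithin (0:ℝ) (Set.Ioi 0),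
      ((Real.sqrt τ : ℝ) : ℂ) *
        Complex.exp (phi τ (q₁ τ) +
          Complex.I * ((2 * (π : ℂ) * (Real.log τ : ℂ) + (π : ℂ)) / (τ : ℂ) ^ 2))
      = -Complex.exp (E τ) := by
    filter_upwards [self_mem_nhdsWithin] with τ hτ
    have hτ0 : (0:ℝ) < τ := hτ
    have hsqrt : Complex.exp (((Real.log τ : ℂ)) / 2) = ((Real.sqrt τ : ℝ) : ℂ) := by
      have h1 : ((Real.log τ : ℂ)) / 2 = ((Real.log τ / 2 : ℝ) : ℂ) := by push_cast; ring
      rw [h1, ← Complex.ofReal_exp]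
      congr 1
      rw [← Real.log_sqrt hτ0.le, Real.exp_log (Real.sqrt_pos.mpr hτ0)]
    have hexp : Complex.exp (E τ) = Complex.exp (phi τ (q₁ τ) +
        Complex.I * ((2 * (π : ℂ) * (Real.log τ : ℂ) + (π : ℂ)) / (τ : ℂ) ^ 2)) *
        ((Real.sqrt τ : ℝ) : ℂ) * (-1) := by
      rw [hE]
      simp only
      rw [Complex.exp_sub, Complex.exp_add, hsqrt, Complex.exp_pi_mul_I]
      field_simp
    rw [hexp]
    ring
  rw [tendsto_congr' heq]
  have hE0 : Tendsto E (nhdsWithin (0:ℝ) (Set.Ioi 0)) (nhds 0) := by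
    have hb : ∀ᶠ τ in nhdsWithin (0:ℝ) (Set.Ioi 0), ‖E τ‖ ≤ 4 * τ^2 := by
      filter_upwards [Ioc_mem_nhdsGT_of_mem (by norm_num : (0:ℝ) ∈ Set.Ico 0 (1/4))]
        with τ hτ
      exact key_bound τ hτ.1 hτ.2 (q₁ τ) (hq₁ τ hτ.1 hτ.2).1
    have hg : Tendsto (fun τ : ℝ => 4 * τ^2) (nhdsWithin (0:ℝ) (Set.Ioi 0)) (nhds 0) := by
      have hc : Continuous (fun τ : ℝ => 4 * τ^2) := by continuity
      have h : Tendsto (fun τ : ℝ => 4 * τ^2) (nhds 0) (nhds 0) := by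
        have := hc.tendsto (0:ℝ)
        simpa using this
      exact h.mono_left nhdsWithin_le_nhds
    exact squeeze_zero_norm' hb hg
  have hfin : Tendsto (fun τ : ℝ => -Complex.exp (E τ)) (nhdsWithin (0:ℝ) (Set.Ioi 0))
      (nhds (-Complex.exp 0)) :=
    ((Complex.continuous_exp.tendsto 0).comp hE0).neg
  simpa using hfin
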